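/- For the three patterns A_1 = THH, A_2 = HTH, A_3 = HHT in the three-player game with heads probability p and tails probability q = 1 − p (0 < p < 1), the winning probabilities are p_{A_1} = q(1 + pq)/(1 + q), p_{A_2} = q/(1 + q), and p_{A_3} = p(1 − q^2)/(1 + q). In particular, for the fair coin p = 1/2 one gets p_{A_1} = 5/12, p_{A_2} = 1/3 and p_{A_3} = 1/4. -/

import Mathlib

open MeasureTheory ENNReal

noncomputable section

/-- Probability of a single toss outcome: `true` (heads) has probability `p`,
`false` (tails) has probability `1 - p`. -/
def letterP (p : ℝ) (b : Bool) : ℝ := if b then p else 1 - p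

/-- Probability of a finite string of tosses (`1` for the empty string). -/
def strP (p : ℝ) (A : List Bool) : ℝ := (A.map (letterP p)).prod

/-- `μ` is the product measure on `{H,T}^ℕ` of i.i.d. coin tosses with heads
probability `p`: every cylinder set has the product probability. -/
def IsCoinMeasure (p : ℝ) (μ : Measure (ℕ → Bool)) : Prop :=
  ∀ (n : ℕ) (a : Fin n → Bool),
    μ {ξ | ∀ i : Fin n, ξ i = a i} = ENNReal.ofReal (∏ i, letterP p (a i))

/-- The pattern `A` (of length `l`) occurs ending exactly at toss `n`
(toss number `k ≥ 1` of `ξ` is `ξ (k - 1)`): `n ≥ l` and tosses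
`n - l + 1, …, n` spell `A`. -/
def occursAt (A : List Bool) (ξ : ℕ → Bool) (n : ℕ) : Prop :=
  A.length ≤ n ∧ (List.ofFn fun k : Fin A.length => ξ (n - A.length + k)) = A

/-- The first toss at which the pattern `A` has occurred (`⊤` if it never occurs). -/
def hitTime (A : List Bool) (ξ : ℕ → Bool) : ℕ∞ :=
  ⨅ (n : ℕ) (_ : occursAt A ξ n), (n : ℕ∞)

/-- The number of tosses until the `m`-player game ends: the minimum of the
hitting times of the patterns `A i`. -/
def gameTime {m : ℕ} (A : Fin m → List Bool) (ξ : ℕ → Bool) : ℕ∞ :=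
  ⨅ i, hitTime (A i) ξ

/-- The three patterns of the example: `A₁ = THH`, `A₂ = HTH`, `A₃ = HHT`
(heads `H = true`, tails `T = false`). -/
def exPatterns : Fin 3 → List Bool :=
  ![[false, true, true], [true, false, true], [true, true, false]]


/-! ### Cylinders -/

def Cyl (w : List Bool) : Set (ℕ → Bool) := {ξ | ∀ k, k < w.length → ξ k = w.getD k false}

lemma measurableSet_cyl (w : List Bool) : MeasurableSet (Cyl w) := by
  have : Cyl w = ⋂ (k : ℕ) (_ : k < w.length), (fun ξ : ℕ → Bool => ξ k) ⁻¹' {w.getD k false} := by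
    ext ξ; simp [Cyl, Set.mem_iInter]
  rw [this]
  exact MeasurableSet.iInter fun k => MeasurableSet.iInter fun _ =>
    (measurable_pi_apply k) (measurableSet_singleton _)

lemma coin_cyl {p : ℝ} {μ : Measure (ℕ → Bool)} (hμ : IsCoinMeasure p μ) (w : List Bool) :
    μ (Cyl w) = ENNReal.ofReal (strP p w) := by
  have h1 : Cyl w = {ξ | ∀ i : Fin w.length, ξ i = w.getD i false} := by
    ext ξ
    constructor
    · intro h i; exact h i i.isLt
    · intro h k hk; exact h ⟨k, hk⟩
  have h2 : (∏ i : Fin w.length, letterP p (w.getD i false)) = strP p w := by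
    have : w.map (letterP p) = List.ofFn (fun i : Fin w.length => letterP p (w.getD i false)) := by
      conv_lhs => rw [← List.ofFn_getElem (xs := w)]
      rw [List.map_ofFn]
      congr 1
      funext i
      simp [List.getD_eq_getElem w false i.isLt]
    rw [strP, this, List.prod_ofFn]
  rw [h1, hμ w.length (fun i => w.getD i false), h2]

/-! ### Bad triples -/

def Bad (a b c : Bool) : Bool := (!a && b && c) || (a && !b && c) || (a && b && !c)

lemma occursAt_triple (a b c : Bool) (ξ : ℕ → Bool) (m : ℕ) :
    occursAt [a, b, c] ξ m ↔ 3 ≤ m ∧ ξ (m - 3) = a ∧ ξ (m - 2) = b ∧ ξ (m - 1) = c := by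
  have e1 : ∀ h : 3 ≤ m, m - 3 + 1 = m - 2 := by omega
  have e2 : ∀ h : 3 ≤ m, m - 3 + 2 = m - 1 := by omega
  constructor
  · rintro ⟨h3, heq⟩
    simp only [List.length_cons, List.length_nil] at heq h3
    rw [show (2+1 : ℕ) = 3 by rfl] at heq h3
    refine ⟨h3, ?_⟩
    rw [List.ofFn_succ, List.ofFn_succ, List.ofFn_succ, List.ofFn_zero] at heq
    simp only [Fin.val_zero, Fin.val_succ, Nat.add_zero] at heq
    injection heq with hh tt
    injection tt with hh2 tt2
    injection tt2 with hh3 _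
    rw [e1 h3] at hh2; rw [e2 h3] at hh3
    exact ⟨hh, hh2, hh3⟩
  · rintro ⟨h3, h0, h1, h2⟩
    refine ⟨by simpa using h3, ?_⟩
    simp only [List.length_cons, List.length_nil]
    rw [show ((0+1)+1+1 : ℕ) = 3 by rfl]
    rw [List.ofFn_succ, List.ofFn_succ, List.ofFn_succ, List.ofFn_zero]
    simp only [Fin.val_zero, Fin.val_succ, Nat.add_zero]
    rw [e1 h3, e2 h3, h0, h1, h2]

lemma exPat_triple : ∀ j : Fin 3, ∃ a b c : Bool, exPatterns j = [a, b, c] ∧ Bad a b c = true := by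
  intro j
  fin_cases j
  · exact ⟨false, true, true, rfl, rfl⟩
  · exact ⟨true, false, true, rfl, rfl⟩
  · exact ⟨true, true, false, rfl, rfl⟩

lemma exPat_inj : ∀ j j' : Fin 3, exPatterns j = exPatterns j' → j = j' := by
  decide

/-! ### Master lemma -/

lemma master {w : List Bool} {i : Fin 3}
    (h3 : 3 ≤ w.length)
    (hend : exPatterns i =
      [w.getD (w.length - 3) false, w.getD (w.length - 2) false, w.getD (w.length - 1) false])
    (hno : ∀ t, t + 3 < w.length →
      Bad (w.getD t false) (w.getD (t + 1) false) (w.getD (t + 2) false) = false)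
    {ξ : ℕ → Bool} (hξ : ξ ∈ Cyl w) :
    gameTime exPatterns ξ = (w.length : ℕ∞) ∧ hitTime (exPatterns i) ξ = (w.length : ℕ∞) ∧
      ∀ j : Fin 3, j ≠ i → hitTime (exPatterns j) ξ ≠ (w.length : ℕ∞) := by
  set n := w.length with hn
  have hocc : ∀ (j : Fin 3) (m : ℕ), occursAt (exPatterns j) ξ m → n ≤ m ∧ (m = n → j = i) := by
    intro j m hjm
    obtain ⟨a, b, c, hA, hbad⟩ := exPat_triple j
    rw [hA, occursAt_triple] at hjm
    obtain ⟨h3m, hx, hy, hz⟩ := hjm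
    constructor
    · by_contra hlt
      push_neg at hlt
      have e1 : ξ (m - 3) = w.getD (m - 3) false := hξ _ (by omega)
      have e2 : ξ (m - 2) = w.getD (m - 2) false := hξ _ (by omega)
      have e3 : ξ (m - 1) = w.getD (m - 1) false := hξ _ (by omega)
      have := hno (m - 3) (by omega)
      rw [show m - 3 + 1 = m - 2 by omega, show m - 3 + 2 = m - 1 by omega] at this
      rw [← e1, ← e2, ← e3, hx, hy, hz] at this
      rw [hbad] at this
      simp at this
    · intro hmn
      subst hmn
      apply exPat_inj
      rw [hA, hend]
      have e1 : ξ (n - 3) = w.getD (n - 3) false := hξ _ (by omega)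
      have e2 : ξ (n - 2) = w.getD (n - 2) false := hξ _ (by omega)
      have e3 : ξ (n - 1) = w.getD (n - 1) false := hξ _ (by omega)
      rw [← e1, ← e2, ← e3, hx, hy, hz]
  have hoccn : occursAt (exPatterns i) ξ n := by
    rw [hend, occursAt_triple]
    exact ⟨h3, hξ _ (by omega), hξ _ (by omega), hξ _ (by omega)⟩
  have hle : hitTime (exPatterns i) ξ ≤ (n : ℕ∞) := iInf₂_le n hoccn
  have hge : ∀ j : Fin 3, (n : ℕ∞) ≤ hitTime (exPatterns j) ξ := fun j =>
    le_iInf₂ fun m hm => by exact_mod_cast (hocc j m hm).1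
  have hgame : gameTime exPatterns ξ = (n : ℕ∞) :=
    le_antisymm (le_trans (iInf_le _ i) hle) (le_iInf hge)
  refine ⟨hgame, le_antisymm hle (hge i), ?_⟩
  intro j hji heq
  have hstrict : ((n : ℕ∞) + 1) ≤ hitTime (exPatterns j) ξ := by
    refine le_iInf₂ fun m hm => ?_
    have h1 := (hocc j m hm).1
    have h2 := (hocc j m hm).2
    have : n + 1 ≤ m := by
      rcases Nat.lt_or_ge n m with h | h
      · omega
      · exact absurd (h2 (le_antisymm h h1)) hji
    exact_mod_cast Nat.cast_le.2 this
  rw [heq] at hstrict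
  have hlt : ((n : ℕ∞)) < (n : ℕ∞) + 1 := (ENat.lt_add_one_iff (ENat.coe_ne_top n)).mpr le_rfl
  exact absurd hstrict (not_le.mpr hlt)

/-! ### Word families -/

def blkW (d : ℕ) : List Bool := true :: List.replicate (d + 2) false

def JW (l : List ℕ) : List Bool := (l.map blkW).flatten

def OKf (L : List Bool) : Prop :=
  ∀ t, t + 2 < L.length →
    Bad (L.getD t false) (L.getD (t + 1) false) (L.getD (t + 2) false) = false

lemma getD_repl_lt {a i : ℕ} (M : List Bool) (h : i < a) :
    (List.replicate a false ++ M).getD i false = false := by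
  rw [List.getD_append _ _ _ _ (by simpa using h)]
  rw [List.getD_eq_getElem _ _ (by simpa using h)]
  simp

lemma getD_mid (a : ℕ) (L : List Bool) :
    (List.replicate a false ++ true :: L).getD a false = true := by
  rw [List.getD_append_right _ _ _ _ (by simp)]
  simp

lemma getD_high (a k : ℕ) (L : List Bool) :
    (List.replicate a false ++ true :: L).getD (a + 1 + k) false = L.getD k false := by
  rw [List.getD_append_right _ _ _ _ (by simp; omega)]
  simp only [List.length_replicate]
  rw [show a + 1 + k - a = k + 1 by omega]
  rfl

lemma okf_glue (a : ℕ) (L : List Bool) (hL : OKf L)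
    (h0 : ∀ j, j < 2 → j < L.length → L.getD j false = false) :
    OKf (List.replicate a false ++ true :: L) := by
  intro t ht
  have hlen : (List.replicate a false ++ true :: L).length = a + 1 + L.length := by simp; omega
  rw [hlen] at ht
  rcases Nat.lt_or_ge (t + 2) a with h | h
  · rw [getD_repl_lt _ (by omega), getD_repl_lt _ (by omega), getD_repl_lt _ (by omega)]
    decide
  rcases Nat.eq_or_lt_of_le h with h2 | h2
  · rw [getD_repl_lt _ (by omega), getD_repl_lt _ (by omega), show t + 2 = a from h2.symm,
      getD_mid]
    decide
  rcases Nat.eq_or_lt_of_le (Nat.succ_le_of_lt h2) with h3 | h3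
  · -- t + 1 = a
    have ha : a = t + 1 := by omega
    subst ha
    rw [getD_repl_lt _ (by omega), getD_mid, show t + 1 + 1 + 0 = t + 2 by omega]
    rw [show t + 2 = (t + 1) + 1 + 0 by omega, getD_high]
    have hL0 : L.getD 0 false = false := h0 0 (by omega) (by omega)
    rw [hL0]
    decide
  rcases Nat.eq_or_lt_of_le (Nat.succ_le_of_lt (by omega : a < t + 1)) with h4 | h4
  · -- t = a
    have ha : a = t := by omega
    rw [ha] at *
    rw [getD_mid, show t + 1 = t + 1 + 0 by omega, show t + 2 = t + 1 + 1 by omega,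
      getD_high, getD_high]
    rw [h0 0 (by omega) (by omega), h0 1 (by omega) (by omega)]
    decide
  · -- t > a
    obtain ⟨k, hk⟩ : ∃ k, t = a + 1 + k := ⟨t - a - 1, by omega⟩
    subst hk
    rw [getD_high, show a + 1 + k + 1 = a + 1 + (k + 1) by omega,
      show a + 1 + k + 2 = a + 1 + (k + 2) by omega, getD_high, getD_high]
    exact hL k (by omega)

lemma jw_cons (d : ℕ) (t : List ℕ) (s : List Bool) :
    JW (d :: t) ++ s = true :: (List.replicate (d + 2) false ++ (JW t ++ s)) := by
  simp [JW, blkW]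

lemma ok_main (s : List Bool) (hs : OKf s)
    (h0 : ∀ j, j < 2 → j < s.length → s.getD j false = false) :
    ∀ (l : List ℕ) (a : ℕ), OKf (List.replicate a false ++ (JW l ++ true :: s)) := by
  intro l
  induction l with
  | nil =>
    intro a
    simpa [JW] using okf_glue a s hs h0
  | cons d t ih =>
    intro a
    rw [jw_cons]
    exact okf_glue a _ (ih (d + 2)) (fun j hj hj' => getD_repl_lt _ (by omega))

lemma okf_nil : OKf ([] : List Bool) := by intro t ht; simp at ht
lemma okf_single (b : Bool) : OKf [b] := by intro t ht; simp at ht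

lemma getD_repl_false (a i : ℕ) : (List.replicate a false).getD i false = false := by
  rcases Nat.lt_or_ge i a with h | h
  · rw [List.getD_eq_getElem _ _ (by simpa using h)]; simp
  · rw [List.getD_eq_getElem?_getD, List.getElem?_eq_none (by simpa using h)]; rfl

lemma okf_repl_true (n : ℕ) : OKf (List.replicate n true) := by
  intro t ht
  simp only [List.length_replicate] at ht
  rw [List.getD_eq_getElem _ _ (by simp; omega), List.getD_eq_getElem _ _ (by simp; omega),
    List.getD_eq_getElem _ _ (by simp; omega)]
  simp [List.getElem_replicate]
  decide

lemma hno_of_okf {M : List Bool} {x : Bool} (hM : OKf M) :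
    ∀ t, t + 3 < (M ++ [x]).length →
      Bad ((M ++ [x]).getD t false) ((M ++ [x]).getD (t + 1) false)
        ((M ++ [x]).getD (t + 2) false) = false := by
  intro t ht
  simp only [List.length_append, List.length_cons, List.length_nil] at ht
  rw [List.getD_append _ _ _ _ (by omega), List.getD_append _ _ _ _ (by omega),
    List.getD_append _ _ _ _ (by omega)]
  exact hM t (by omega)

/-! ### The explicit winning words -/

def wd1 (a : ℕ) (l : List ℕ) : List Bool := List.replicate a false ++ (JW l ++ [true, true])
def wd2 (a : ℕ) (l : List ℕ) : List Bool :=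
  List.replicate a false ++ (JW l ++ [true, false, true])
def wd3 (k : ℕ) : List Bool := List.replicate (k + 2) true ++ [false]

lemma getD_suffix (P L : List Bool) (k : ℕ) :
    (P ++ L).getD (P.length + k) false = L.getD k false := by
  rw [List.getD_append_right _ _ _ _ (by omega)]
  simp

lemma blk_getLast (d : ℕ) : (blkW d).getLast? = some false := by
  have : blkW d = (true :: List.replicate (d + 1) false) ++ [false] := by
    rw [blkW, List.replicate_succ']
    simp
  rw [this, List.getLast?_concat]

lemma jw_getLast : ∀ (t : List ℕ) (d : ℕ), (JW (d :: t)).getLast? = some false := by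
  intro t
  induction t with
  | nil =>
    intro d
    show ((blkW d) ++ JW []).getLast?  = some false
    rw [List.getLast?_append]
    simp [JW, blk_getLast]
  | cons e t' ih =>
    intro d
    show ((blkW d) ++ JW (e :: t')).getLast? = some false
    rw [List.getLast?_append, ih e]
    rfl

lemma prefix_last (a : ℕ) (l : List ℕ) (h : a + (JW l).length ≠ 0) :
    (List.replicate a false ++ JW l).getD (a + (JW l).length - 1) false = false := by
  set P := List.replicate a false ++ JW l with hP
  have hlen : P.length = a + (JW l).length := by simp [hP]
  have hlast : P.getLast? = some false := by
    cases l with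
    | nil =>
      have hP2 : P = List.replicate a false := by simp [hP, JW]
      rw [hP2]
      cases a with
      | zero => simp [JW] at h
      | succ a' => rw [List.replicate_succ', List.getLast?_concat]
    | cons d t =>
      rw [hP, List.getLast?_append, jw_getLast]
      rfl
  rw [List.getD_eq_getElem?_getD, ← hlen, ← List.getLast?_eq_getElem?, hlast]
  rfl

lemma good1 (a : ℕ) (l : List ℕ) (h : a + (JW l).length ≠ 0) {ξ : ℕ → Bool}
    (hξ : ξ ∈ Cyl (wd1 a l)) :
    gameTime exPatterns ξ = ((wd1 a l).length : ℕ∞) ∧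
      hitTime (exPatterns 0) ξ = ((wd1 a l).length : ℕ∞) ∧
      ∀ j : Fin 3, j ≠ 0 → hitTime (exPatterns j) ξ ≠ ((wd1 a l).length : ℕ∞) := by
  set P := List.replicate a false ++ JW l with hP
  have hw : wd1 a l = P ++ [true, true] := by simp [wd1, hP]
  have hlen : P.length = a + (JW l).length := by simp [hP]
  have hn : (wd1 a l).length = P.length + 2 := by rw [hw]; simp
  apply master (i := 0)
  · omega
  · rw [hw]
    have hn2 : (P ++ [true, true]).length = P.length + 2 := by simp
    rw [hn2]
    rw [show P.length + 2 - 3 = P.length - 1 by omega,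
      show P.length + 2 - 2 = P.length + 0 by omega,
      show P.length + 2 - 1 = P.length + 1 by omega,
      getD_suffix, getD_suffix,
      List.getD_append _ _ _ _ (by omega)]
    have hpl := prefix_last a l h
    rw [← hP, ← hlen] at hpl
    rw [hpl]
    rfl
  · have hw2 : wd1 a l = (P ++ [true]) ++ [true] := by rw [hw]; simp
    have hM : P ++ [true] = List.replicate a false ++ (JW l ++ true :: []) := by simp [hP]
    rw [hw2]
    apply hno_of_okf
    rw [hM]
    exact ok_main [] okf_nil (by intro j hj hj'; simp at hj') l a
  · exact hξ

lemma good2 (a : ℕ) (l : List ℕ) {ξ : ℕ → Bool} (hξ : ξ ∈ Cyl (wd2 a l)) :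
    gameTime exPatterns ξ = ((wd2 a l).length : ℕ∞) ∧
      hitTime (exPatterns 1) ξ = ((wd2 a l).length : ℕ∞) ∧
      ∀ j : Fin 3, j ≠ 1 → hitTime (exPatterns j) ξ ≠ ((wd2 a l).length : ℕ∞) := by
  set P := List.replicate a false ++ JW l with hP
  have hw : wd2 a l = P ++ [true, false, true] := by simp [wd2, hP]
  have hn : (wd2 a l).length = P.length + 3 := by rw [hw]; simp
  apply master (i := 1)
  · omega
  · rw [hw]
    have hn2 : (P ++ [true, false, true]).length = P.length + 3 := by simp
    rw [hn2]
    rw [show P.length + 3 - 3 = P.length + 0 by omega,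
      show P.length + 3 - 2 = P.length + 1 by omega,
      show P.length + 3 - 1 = P.length + 2 by omega,
      getD_suffix, getD_suffix, getD_suffix]
    rfl
  · have hw2 : wd2 a l = (P ++ [true, false]) ++ [true] := by rw [hw]; simp
    have hM : P ++ [true, false] = List.replicate a false ++ (JW l ++ true :: [false]) := by
      simp [hP]
    rw [hw2]
    apply hno_of_okf
    rw [hM]
    refine ok_main [false] (okf_single false) ?_ l a
    intro j hj hj'
    simp only [List.length_cons, List.length_nil] at hj'
    interval_cases j
    rfl
  · exact hξ

lemma good3 (k : ℕ) {ξ : ℕ → Bool} (hξ : ξ ∈ Cyl (wd3 k)) :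
    gameTime exPatterns ξ = ((wd3 k).length : ℕ∞) ∧
      hitTime (exPatterns 2) ξ = ((wd3 k).length : ℕ∞) ∧
      ∀ j : Fin 3, j ≠ 2 → hitTime (exPatterns j) ξ ≠ ((wd3 k).length : ℕ∞) := by
  have hn : (wd3 k).length = (k + 2) + 1 := by simp [wd3]
  apply master (i := 2)
  · omega
  · rw [hn]
    rw [show k + 2 + 1 - 3 = k by omega, show k + 2 + 1 - 2 = k + 1 by omega,
      show k + 2 + 1 - 1 = (List.replicate (k + 2) true).length + 0 by simp]
    rw [wd3, getD_suffix,
      List.getD_append _ _ _ _ (by simp), List.getD_append _ _ _ _ (by simp),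
      List.getD_eq_getElem _ _ (by simp), List.getD_eq_getElem _ _ (by simp)]
    simp [List.getElem_replicate]
    rfl
  · show ∀ t, t + 3 < (List.replicate (k+2) true ++ [false]).length → _
    exact hno_of_okf (okf_repl_true (k + 2))
  · exact hξ

/-! ### Injectivity -/

lemma repl_cancel : ∀ (a a' : ℕ) (Y Y' : List Bool), Y.head? = some true →
    Y'.head? = some true → List.replicate a false ++ Y = List.replicate a' false ++ Y' →
    a = a' ∧ Y = Y' := by
  intro a
  induction a with
  | zero =>
    intro a' Y Y' hY hY' heq
    cases a' with
    | zero => exact ⟨rfl, by simpa using heq⟩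
    | succ b =>
      rw [List.replicate_succ] at heq
      simp only [List.replicate_zero, List.nil_append, List.cons_append] at heq
      rw [heq] at hY
      simp at hY
  | succ b ih =>
    intro a' Y Y' hY hY' heq
    cases a' with
    | zero =>
      rw [List.replicate_succ] at heq
      simp only [List.replicate_zero, List.nil_append, List.cons_append] at heq
      rw [← heq] at hY'
      simp at hY'
    | succ b' =>
      rw [List.replicate_succ, List.replicate_succ] at heq
      simp only [List.cons_append, List.cons.injEq] at heq
      obtain ⟨h1, h2⟩ := ih b' Y Y' hY hY' heq.2
      exact ⟨by omega, h2⟩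

lemma jw_head (l : List ℕ) (s : List Bool) : (JW l ++ true :: s).head? = some true := by
  cases l with
  | nil => simp [JW]
  | cons d t => rw [jw_cons]; rfl

lemma jw_inj : ∀ (l l' : List ℕ) (s : List Bool),
    JW l ++ true :: s = JW l' ++ true :: s → l = l' := by
  intro l
  induction l with
  | nil =>
    intro l' s heq
    cases l' with
    | nil => rfl
    | cons d t =>
      rw [jw_cons] at heq
      simp only [JW, List.map_nil, List.flatten_nil, List.nil_append, List.cons.injEq] at heq
      have := congrArg List.length heq.2
      simp at this
      omega
  | cons d t ih =>
    intro l' s heq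
    cases l' with
    | nil =>
      rw [jw_cons] at heq
      simp only [JW, List.map_nil, List.flatten_nil, List.nil_append, List.cons.injEq] at heq
      have := congrArg List.length heq.2
      simp at this
      omega
    | cons d' t' =>
      rw [jw_cons, jw_cons] at heq
      simp only [List.cons.injEq, true_and] at heq
      obtain ⟨h1, h2⟩ := repl_cancel (d + 2) (d' + 2) _ _ (jw_head t s) (jw_head t' s) heq
      have hd : d = d' := by omega
      have ht : t = t' := ih t' s h2
      rw [hd, ht]

lemma wd1_inj {a a' : ℕ} {l l' : List ℕ} (h : wd1 a l = wd1 a' l') : a = a' ∧ l = l' := by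
  have h' : List.replicate a false ++ (JW l ++ true :: [true]) =
      List.replicate a' false ++ (JW l' ++ true :: [true]) := by
    simpa [wd1] using h
  obtain ⟨h1, h2⟩ := repl_cancel a a' _ _ (jw_head l [true]) (jw_head l' [true]) h'
  exact ⟨h1, jw_inj l l' [true] h2⟩

lemma wd2_inj {a a' : ℕ} {l l' : List ℕ} (h : wd2 a l = wd2 a' l') : a = a' ∧ l = l' := by
  have h' : List.replicate a false ++ (JW l ++ true :: [false, true]) =
      List.replicate a' false ++ (JW l' ++ true :: [false, true]) := by
    simpa [wd2] using h
  obtain ⟨h1, h2⟩ := repl_cancel a a' _ _ (jw_head l [false, true]) (jw_head l' [false, true]) h'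
  exact ⟨h1, jw_inj l l' [false, true] h2⟩

lemma wd3_inj {k k' : ℕ} (h : wd3 k = wd3 k') : k = k' := by
  have := congrArg List.length h
  simp [wd3] at this
  omega

/-! ### Disjointness -/

def GoodConc (w : List Bool) (i : Fin 3) (ξ : ℕ → Bool) : Prop :=
  gameTime exPatterns ξ = (w.length : ℕ∞) ∧ hitTime (exPatterns i) ξ = (w.length : ℕ∞) ∧
    ∀ j : Fin 3, j ≠ i → hitTime (exPatterns j) ξ ≠ (w.length : ℕ∞)

lemma disj_same {w w' : List Bool} {i i' : Fin 3}
    (g : ∀ ξ ∈ Cyl w, GoodConc w i ξ) (g' : ∀ ξ ∈ Cyl w', GoodConc w' i' ξ)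
    (hne : w ≠ w') : Disjoint (Cyl w) (Cyl w') := by
  rw [Set.disjoint_left]
  intro ξ h h'
  have c := g ξ h
  have c' := g' ξ h'
  have hlen : w.length = w'.length := by
    have := c.1.symm.trans c'.1
    exact_mod_cast this
  apply hne
  apply List.ext_getElem hlen
  intro k h1 h2
  rw [← List.getD_eq_getElem w false h1, ← List.getD_eq_getElem w' false h2,
    ← h k h1, ← h' k h2]

lemma disj_diff {w w' : List Bool} {i i' : Fin 3}
    (g : ∀ ξ ∈ Cyl w, GoodConc w i ξ) (g' : ∀ ξ ∈ Cyl w', GoodConc w' i' ξ)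
    (hii' : i ≠ i') : Disjoint (Cyl w) (Cyl w') := by
  rw [Set.disjoint_left]
  intro ξ h h'
  have c := g ξ h
  have c' := g' ξ h'
  have h1 : hitTime (exPatterns i') ξ = (w.length : ℕ∞) := by
    rw [c'.2.1]
    have := c.1.symm.trans c'.1
    exact this.symm
  exact (c.2.2 i' (Ne.symm hii') h1)


lemma tsum_pi_fin (f : ℕ → ℝ≥0∞) : ∀ n : ℕ,
    ∑' g : Fin n → ℕ, ∏ i, f (g i) = (∑' d, f d) ^ n := by
  intro n
  induction n with
  | zero =>
    rw [pow_zero]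
    rw [tsum_eq_single (fun _ => 0)]
    · simp
    · intro b hb
      exact absurd (Subsingleton.elim b _) hb
  | succ n ih =>
    rw [pow_succ]
    have he := (Fin.consEquiv (fun _ : Fin (n + 1) => ℕ)).tsum_eq
      (f := fun g : Fin (n + 1) → ℕ => ∏ i, f (g i))
    rw [← he]
    have hx : ∀ x : ℕ × (Fin n → ℕ),
        (∏ i, f (((Fin.consEquiv (fun _ : Fin (n + 1) => ℕ)) x) i)) = f x.1 * ∏ i : Fin n, f (x.2 i) := by
      intro x
      rw [Fin.prod_univ_succ]
      rfl
    rw [tsum_congr hx, ENNReal.tsum_prod']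
    calc ∑' (a : ℕ) (b : Fin n → ℕ), f a * ∏ i, f (b i)
        = ∑' (a : ℕ), f a * ∑' (b : Fin n → ℕ), ∏ i, f (b i) := by
          congr 1; funext a; rw [ENNReal.tsum_mul_left]
      _ = (∑' d, f d) * (∑' (b : Fin n → ℕ), ∏ i, f (b i)) := ENNReal.tsum_mul_right
      _ = (∑' d, f d) ^ n * (∑' d, f d) := by rw [ih, mul_comm]

lemma tsum_list (f : ℕ → ℝ≥0∞) :
    ∑' l : List ℕ, (l.map f).prod = ∑' k : ℕ, (∑' d, f d) ^ k := by
  have he := (List.equivSigmaTuple (α := ℕ)).symm.tsum_eq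
    (f := fun l : List ℕ => (l.map f).prod)
  rw [← he]
  have hx : ∀ x : (n : ℕ) × (Fin n → ℕ),
      ((List.equivSigmaTuple.symm x).map f).prod = ∏ i, f (x.2 i) := by
    rintro ⟨n, g⟩
    show ((List.ofFn g).map f).prod = _
    rw [List.map_ofFn, List.prod_ofFn]
    rfl
  rw [tsum_congr hx,
    ENNReal.tsum_sigma (f := fun (n : ℕ) (g : Fin n → ℕ) => ∏ i, f (g i))]
  congr 1
  funext n
  exact tsum_pi_fin f n

/-! ### word probabilities in `ℝ≥0∞` -/

def lpE (p : ℝ) (b : Bool) : ℝ≥0∞ := ENNReal.ofReal (letterP p b)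

def strE (p : ℝ) (w : List Bool) : ℝ≥0∞ := (w.map (lpE p)).prod

lemma strE_eq {p : ℝ} (hp0 : 0 ≤ p) (hp1 : p ≤ 1) (w : List Bool) :
    ENNReal.ofReal (strP p w) = strE p w := by
  induction w with
  | nil => simp [strP, strE]
  | cons b t ih =>
    have hb : 0 ≤ letterP p b := by
      rcases b <;> simp [letterP] <;> linarith
    rw [strP, strE, List.map_cons, List.map_cons, List.prod_cons, List.prod_cons,
      ENNReal.ofReal_mul hb, show ENNReal.ofReal (List.map (letterP p) t).prod
        = ENNReal.ofReal (strP p t) from rfl, ih]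
    rfl

lemma strE_append (p : ℝ) (u v : List Bool) : strE p (u ++ v) = strE p u * strE p v := by
  simp [strE]

lemma strE_repl_false (p : ℝ) (a : ℕ) :
    strE p (List.replicate a false) = (ENNReal.ofReal (1 - p)) ^ a := by
  simp [strE, lpE, letterP]

lemma strE_blk (p : ℝ) (d : ℕ) :
    strE p (blkW d) = ENNReal.ofReal p * (ENNReal.ofReal (1 - p)) ^ (d + 2) := by
  simp [strE, blkW, lpE, letterP]

lemma strE_JW (p : ℝ) (l : List ℕ) :
    strE p (JW l) =
      (l.map (fun d => ENNReal.ofReal p * (ENNReal.ofReal (1 - p)) ^ (d + 2))).prod := by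
  induction l with
  | nil => simp [strE, JW]
  | cons d t ih =>
    have : JW (d :: t) = blkW d ++ JW t := by simp [JW]
    rw [this, strE_append, strE_blk, ih, List.map_cons, List.prod_cons]

section sums

variable {p : ℝ} (hp0 : 0 < p) (hp1 : p < 1)

include hp1 in
lemma h1Q : 1 - ENNReal.ofReal (1 - p) = ENNReal.ofReal p := by
  rw [← ENNReal.ofReal_one, ← ENNReal.ofReal_sub _ (by linarith : (0:ℝ) ≤ 1 - p)]
  norm_num

include hp0 hp1 in
lemma hBsum : (∑' d : ℕ, ENNReal.ofReal p * (ENNReal.ofReal (1 - p)) ^ (d + 2)) =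
    (ENNReal.ofReal (1 - p)) ^ 2 := by
  set Pp := ENNReal.ofReal p
  set Q := ENNReal.ofReal (1 - p)
  have h1 : ∀ d : ℕ, Pp * Q ^ (d + 2) = (Pp * Q ^ 2) * Q ^ d := by
    intro d; rw [pow_add, mul_comm (Q ^ d), mul_assoc]
  rw [tsum_congr h1, ENNReal.tsum_mul_left, ENNReal.tsum_geometric, h1Q hp1]
  rw [mul_comm Pp (Q ^ 2), mul_assoc, ENNReal.mul_inv_cancel
    (by simpa [Pp] using ENNReal.ofReal_pos.mpr hp0 |>.ne') ENNReal.ofReal_ne_top, mul_one]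

include hp0 hp1 in
lemma hLsum : ∑' l : List ℕ,
    (l.map (fun d => ENNReal.ofReal p * (ENNReal.ofReal (1 - p)) ^ (d + 2))).prod =
    (1 - (ENNReal.ofReal (1 - p)) ^ 2)⁻¹ := by
  rw [tsum_list, hBsum hp0 hp1, ENNReal.tsum_geometric]

include hp0 hp1 in
lemma famsum (c : ℝ≥0∞) :
    ∑' x : ℕ × List ℕ, ((ENNReal.ofReal (1 - p)) ^ x.1 *
      ((x.2.map (fun d => ENNReal.ofReal p * (ENNReal.ofReal (1 - p)) ^ (d + 2))).prod * c)) =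
    (ENNReal.ofReal p)⁻¹ * ((1 - (ENNReal.ofReal (1 - p)) ^ 2)⁻¹ * c) := by
  rw [ENNReal.tsum_prod']
  have h1 : ∀ a : ℕ, (∑' l : List ℕ, ((ENNReal.ofReal (1 - p)) ^ a *
      ((l.map (fun d => ENNReal.ofReal p * (ENNReal.ofReal (1 - p)) ^ (d + 2))).prod * c))) =
      (ENNReal.ofReal (1 - p)) ^ a * ((1 - (ENNReal.ofReal (1 - p)) ^ 2)⁻¹ * c) := by
    intro a
    rw [ENNReal.tsum_mul_left, ENNReal.tsum_mul_right, hLsum hp0 hp1]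
  rw [tsum_congr h1, ENNReal.tsum_mul_right, ENNReal.tsum_geometric, h1Q hp1]

lemma strE_wd1 (a : ℕ) (l : List ℕ) :
    strE p (wd1 a l) = (ENNReal.ofReal (1 - p)) ^ a *
      ((l.map (fun d => ENNReal.ofReal p * (ENNReal.ofReal (1 - p)) ^ (d + 2))).prod *
        (ENNReal.ofReal p * ENNReal.ofReal p)) := by
  rw [wd1, strE_append, strE_append, strE_repl_false, strE_JW]
  congr 1
  congr 1
  simp [strE, lpE, letterP]

lemma strE_wd2 (a : ℕ) (l : List ℕ) :
    strE p (wd2 a l) = (ENNReal.ofReal (1 - p)) ^ a *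
      ((l.map (fun d => ENNReal.ofReal p * (ENNReal.ofReal (1 - p)) ^ (d + 2))).prod *
        (ENNReal.ofReal p * (ENNReal.ofReal (1 - p) * ENNReal.ofReal p))) := by
  rw [wd2, strE_append, strE_append, strE_repl_false, strE_JW]
  congr 1
  congr 1
  simp [strE, lpE, letterP, mul_assoc]

lemma strE_wd3 (k : ℕ) :
    strE p (wd3 k) = (ENNReal.ofReal p) ^ (k + 2) * ENNReal.ofReal (1 - p) := by
  rw [wd3, strE_append]
  simp [strE, lpE, letterP]

end sums

/-! ### Event bridge -/

def Ev (i : Fin 3) : Set (ℕ → Bool) :=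
  {ξ | gameTime exPatterns ξ = hitTime (exPatterns i) ξ ∧ gameTime exPatterns ξ ≠ ⊤}

lemma mem_Ev_of_good {w : List Bool} {i : Fin 3} {ξ : ℕ → Bool} (g : GoodConc w i ξ) :
    ξ ∈ Ev i := by
  refine ⟨g.1.trans g.2.1.symm, ?_⟩
  rw [g.1]
  exact ENat.coe_ne_top _

lemma not_mem_Ev_of_good {w : List Bool} {i i' : Fin 3} {ξ : ℕ → Bool}
    (g : GoodConc w i ξ) (hii' : i' ≠ i) : ξ ∉ Ev i' := by
  rintro ⟨h1, h2⟩
  exact g.2.2 i' hii' (h1.symm.trans g.1)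

lemma jw_len_zero {l : List ℕ} : (JW l).length = 0 ↔ l = [] := by
  cases l with
  | nil => simp [JW]
  | cons d t => simp [JW, blkW]

lemma tsum_ne_compl {α : Type*} (f : α → ℝ≥0∞) (c : α) :
    f c + ∑' x : {y : α // y ≠ c}, f x.1 = ∑' x, f x := by
  have h := Summable.tsum_add_tsum_compl (s := ({c} : Set α)) (f := f)
    ENNReal.summable ENNReal.summable
  rw [tsum_singleton] at h
  exact h

/-! ### The unions -/

def IdxT : Type := {y : ℕ × List ℕ // y ≠ ((0 : ℕ), ([] : List ℕ))}

instance : Countable IdxT := by unfold IdxT; infer_instance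

def U1 : Set (ℕ → Bool) := ⋃ x : IdxT, Cyl (wd1 x.1.1 x.1.2)
def U2 : Set (ℕ → Bool) := ⋃ x : ℕ × List ℕ, Cyl (wd2 x.1 x.2)
def U3 : Set (ℕ → Bool) := ⋃ k : ℕ, Cyl (wd3 k)

lemma wd1_constraint {x : ℕ × List ℕ} (hx : x ≠ ((0 : ℕ), ([] : List ℕ))) :
    x.1 + (JW x.2).length ≠ 0 := by
  intro h
  apply hx
  have h1 : x.1 = 0 := by omega
  have h2 : (JW x.2).length = 0 := by omega
  rw [jw_len_zero] at h2
  exact Prod.ext h1 h2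

lemma good1x (x : IdxT) : ∀ ξ ∈ Cyl (wd1 x.1.1 x.1.2), GoodConc (wd1 x.1.1 x.1.2) 0 ξ :=
  fun ξ hξ => good1 x.1.1 x.1.2 (wd1_constraint x.2) hξ

lemma good2x (x : ℕ × List ℕ) : ∀ ξ ∈ Cyl (wd2 x.1 x.2), GoodConc (wd2 x.1 x.2) 1 ξ :=
  fun ξ hξ => good2 x.1 x.2 hξ

lemma good3x (k : ℕ) : ∀ ξ ∈ Cyl (wd3 k), GoodConc (wd3 k) 2 ξ :=
  fun ξ hξ => good3 k hξ

lemma U1_subset : U1 ⊆ Ev 0 := by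
  rintro ξ hξ
  obtain ⟨x, hx⟩ := Set.mem_iUnion.mp hξ
  exact mem_Ev_of_good (good1x x ξ hx)

lemma U2_subset : U2 ⊆ Ev 1 := by
  rintro ξ hξ
  obtain ⟨x, hx⟩ := Set.mem_iUnion.mp hξ
  exact mem_Ev_of_good (good2x x ξ hx)

lemma U3_subset : U3 ⊆ Ev 2 := by
  rintro ξ hξ
  obtain ⟨x, hx⟩ := Set.mem_iUnion.mp hξ
  exact mem_Ev_of_good (good3x x ξ hx)

lemma U1_nEv {i : Fin 3} (hi : i ≠ 0) : Disjoint U1 (Ev i) := by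
  rw [Set.disjoint_left]
  intro ξ hξ
  obtain ⟨x, hx⟩ := Set.mem_iUnion.mp hξ
  exact not_mem_Ev_of_good (good1x x ξ hx) hi

lemma U2_nEv {i : Fin 3} (hi : i ≠ 1) : Disjoint U2 (Ev i) := by
  rw [Set.disjoint_left]
  intro ξ hξ
  obtain ⟨x, hx⟩ := Set.mem_iUnion.mp hξ
  exact not_mem_Ev_of_good (good2x x ξ hx) hi

lemma U3_nEv {i : Fin 3} (hi : i ≠ 2) : Disjoint U3 (Ev i) := by
  rw [Set.disjoint_left]
  intro ξ hξ
  obtain ⟨x, hx⟩ := Set.mem_iUnion.mp hξ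
  exact not_mem_Ev_of_good (good3x x ξ hx) hi

lemma U1_meas : MeasurableSet U1 := MeasurableSet.iUnion fun x => measurableSet_cyl _
lemma U2_meas : MeasurableSet U2 := MeasurableSet.iUnion fun x => measurableSet_cyl _
lemma U3_meas : MeasurableSet U3 := MeasurableSet.iUnion fun x => measurableSet_cyl _

section meas

variable {p : ℝ} {μ : Measure (ℕ → Bool)} (hμ : IsCoinMeasure p μ) (hp0 : 0 < p) (hp1 : p < 1)

include hμ hp0 hp1 in
lemma mu_U1 : μ U1 + ENNReal.ofReal p * ENNReal.ofReal p =
    (ENNReal.ofReal p)⁻¹ * ((1 - ENNReal.ofReal (1 - p) ^ 2)⁻¹ *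
      (ENNReal.ofReal p * ENNReal.ofReal p)) := by
  have hdisj : Pairwise (Function.onFun Disjoint fun x : IdxT => Cyl (wd1 x.1.1 x.1.2)) := by
    intro x y hxy
    apply disj_same (good1x x) (good1x y)
    intro h
    obtain ⟨h1, h2⟩ := wd1_inj h
    exact hxy (Subtype.ext (Prod.ext h1 h2))
  rw [U1, measure_iUnion hdisj (fun x => measurableSet_cyl _)]
  rw [tsum_congr (fun x : IdxT =>
    (coin_cyl hμ (wd1 x.1.1 x.1.2)).trans (strE_eq hp0.le hp1.le _))]
  have h0 : strE p (wd1 0 []) = ENNReal.ofReal p * ENNReal.ofReal p := by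
    rw [strE_wd1]; simp
  have hsum := tsum_ne_compl (fun y : ℕ × List ℕ => strE p (wd1 y.1 y.2))
    ((0 : ℕ), ([] : List ℕ))
  rw [h0] at hsum
  rw [add_comm]
  rw [show (∑' x : IdxT, strE p (wd1 x.1.1 x.1.2)) =
    ∑' x : {y : ℕ × List ℕ // y ≠ ((0 : ℕ), ([] : List ℕ))}, strE p (wd1 x.1.1 x.1.2) from rfl]
  rw [hsum, tsum_congr (fun y : ℕ × List ℕ => strE_wd1 y.1 y.2), famsum hp0 hp1]

include hμ hp0 hp1 in
lemma mu_U2 : μ U2 =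
    (ENNReal.ofReal p)⁻¹ * ((1 - ENNReal.ofReal (1 - p) ^ 2)⁻¹ *
      (ENNReal.ofReal p * (ENNReal.ofReal (1 - p) * ENNReal.ofReal p))) := by
  have hdisj : Pairwise (Function.onFun Disjoint fun x : ℕ × List ℕ => Cyl (wd2 x.1 x.2)) := by
    intro x y hxy
    apply disj_same (good2x x) (good2x y)
    intro h
    obtain ⟨h1, h2⟩ := wd2_inj h
    exact hxy (Prod.ext h1 h2)
  rw [U2, measure_iUnion hdisj (fun x => measurableSet_cyl _)]
  rw [tsum_congr (fun x : ℕ × List ℕ =>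
    (coin_cyl hμ (wd2 x.1 x.2)).trans (strE_eq hp0.le hp1.le _))]
  rw [tsum_congr (fun y : ℕ × List ℕ => strE_wd2 y.1 y.2), famsum hp0 hp1]

include hμ hp0 hp1 in
lemma mu_U3 : μ U3 = (ENNReal.ofReal p) ^ 2 := by
  have hdisj : Pairwise (Function.onFun Disjoint fun k : ℕ => Cyl (wd3 k)) := by
    intro x y hxy
    apply disj_same (good3x x) (good3x y)
    intro h
    exact hxy (wd3_inj h)
  rw [U3, measure_iUnion hdisj (fun x => measurableSet_cyl _)]
  rw [tsum_congr (fun k : ℕ =>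
    (coin_cyl hμ (wd3 k)).trans (strE_eq hp0.le hp1.le _))]
  rw [tsum_congr (fun k : ℕ => strE_wd3 k)]
  have h1 : ∀ k : ℕ, (ENNReal.ofReal p) ^ (k + 2) * ENNReal.ofReal (1 - p) =
      ((ENNReal.ofReal p) ^ 2 * ENNReal.ofReal (1 - p)) * (ENNReal.ofReal p) ^ k := by
    intro k
    rw [pow_add]
    ring
  rw [tsum_congr h1, ENNReal.tsum_mul_left, ENNReal.tsum_geometric]
  have h2 : 1 - ENNReal.ofReal p = ENNReal.ofReal (1 - p) := by
    rw [← ENNReal.ofReal_one, ← ENNReal.ofReal_sub _ hp0.le]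
  rw [h2, mul_assoc, ENNReal.mul_inv_cancel
    (ENNReal.ofReal_pos.mpr (by linarith) |>.ne') ENNReal.ofReal_ne_top, mul_one]

end meas

/-- For the three patterns `A₁ = THH`, `A₂ = HTH`, `A₃ = HHT` in
the three-player game with heads probability `p` and tails probability `q = 1 − p`
(`0 < p < 1`), the winning probabilities are `p_{A₁} = q(1 + pq)/(1 + q)`,
`p_{A₂} = q/(1 + q)`, and `p_{A₃} = p(1 − q²)/(1 + q)`. In particular, for the
fair coin `p = 1/2` one gets `p_{A₁} = 5/12`, `p_{A₂} = 1/3` and `p_{A₃} = 1/4`. -/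
theorem example_three_players (p : ℝ) (hp0 : 0 < p) (hp1 : p < 1)
    (μ : Measure (ℕ → Bool)) [IsProbabilityMeasure μ] (hμ : IsCoinMeasure p μ) :
    (μ {ξ | gameTime exPatterns ξ = hitTime (exPatterns 0) ξ ∧
        gameTime exPatterns ξ ≠ ⊤}).toReal =
      (1 - p) * (1 + p * (1 - p)) / (1 + (1 - p)) ∧
    (μ {ξ | gameTime exPatterns ξ = hitTime (exPatterns 1) ξ ∧
        gameTime exPatterns ξ ≠ ⊤}).toReal =
      (1 - p) / (1 + (1 - p)) ∧
    (μ {ξ | gameTime exPatterns ξ = hitTime (exPatterns 2) ξ ∧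
        gameTime exPatterns ξ ≠ ⊤}).toReal =
      p * (1 - (1 - p) ^ 2) / (1 + (1 - p)) ∧
    (p = 1 / 2 →
      (μ {ξ | gameTime exPatterns ξ = hitTime (exPatterns 0) ξ ∧
          gameTime exPatterns ξ ≠ ⊤}).toReal = 5 / 12 ∧
      (μ {ξ | gameTime exPatterns ξ = hitTime (exPatterns 1) ξ ∧
          gameTime exPatterns ξ ≠ ⊤}).toReal = 1 / 3 ∧
      (μ {ξ | gameTime exPatterns ξ = hitTime (exPatterns 2) ξ ∧
          gameTime exPatterns ξ ≠ ⊤}).toReal = 1 / 4) := by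
  have hq0 : (0 : ℝ) < 1 - p := by linarith
  have hρ : (0 : ℝ) < 1 - (1 - p) ^ 2 := by nlinarith
  have hD : (1 : ℝ≥0∞) - (ENNReal.ofReal (1 - p)) ^ 2 = ENNReal.ofReal (1 - (1 - p) ^ 2) := by
    rw [← ENNReal.ofReal_pow hq0.le, ← ENNReal.ofReal_one,
      ← ENNReal.ofReal_sub _ (by positivity)]
  -- real values of the union measures
  have hPfin : ENNReal.ofReal p * ENNReal.ofReal p ≠ ⊤ :=
    ENNReal.mul_ne_top ENNReal.ofReal_ne_top ENNReal.ofReal_ne_top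
  have hVtoReal : ∀ c : ℝ≥0∞, c ≠ ⊤ →
      ((ENNReal.ofReal p)⁻¹ * ((1 - (ENNReal.ofReal (1 - p)) ^ 2)⁻¹ * c)).toReal =
        p⁻¹ * ((1 - (1 - p) ^ 2)⁻¹ * c.toReal) := by
    intro c hc
    rw [hD, ENNReal.toReal_mul, ENNReal.toReal_mul, ENNReal.toReal_inv, ENNReal.toReal_inv,
      ENNReal.toReal_ofReal hp0.le, ENNReal.toReal_ofReal hρ.le]
  have h1 : (μ U1).toReal + p * p = p⁻¹ * ((1 - (1 - p) ^ 2)⁻¹ * (p * p)) := by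
    have := congrArg ENNReal.toReal (mu_U1 hμ hp0 hp1)
    rw [ENNReal.toReal_add (measure_ne_top μ U1) hPfin, hVtoReal _ hPfin] at this
    simpa [ENNReal.toReal_mul, ENNReal.toReal_ofReal hp0.le] using this
  have h2 : (μ U2).toReal = p⁻¹ * ((1 - (1 - p) ^ 2)⁻¹ * (p * ((1 - p) * p))) := by
    have := congrArg ENNReal.toReal (mu_U2 hμ hp0 hp1)
    have hc : ENNReal.ofReal p * (ENNReal.ofReal (1 - p) * ENNReal.ofReal p) ≠ ⊤ :=
      ENNReal.mul_ne_top ENNReal.ofReal_ne_top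
        (ENNReal.mul_ne_top ENNReal.ofReal_ne_top ENNReal.ofReal_ne_top)
    rw [hVtoReal _ hc] at this
    simpa [ENNReal.toReal_mul, ENNReal.toReal_ofReal hp0.le,
      ENNReal.toReal_ofReal hq0.le] using this
  have h3 : (μ U3).toReal = p ^ 2 := by
    have := congrArg ENNReal.toReal (mu_U3 hμ hp0 hp1)
    rw [ENNReal.toReal_pow, ENNReal.toReal_ofReal hp0.le] at this
    exact this
  -- basic disjointness between the unions
  have d12 : Disjoint U1 U2 := ((U1_nEv (by decide)).mono_right U2_subset)
  have d13 : Disjoint U1 U3 := ((U1_nEv (by decide)).mono_right U3_subset)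
  have d23 : Disjoint U2 U3 := ((U2_nEv (by decide)).mono_right U3_subset)
  -- squeeze
  have key : ∀ (i : Fin 3) (Ua Ub Uc : Set (ℕ → Bool)),
      Ua ⊆ Ev i → MeasurableSet Ub → MeasurableSet Uc → Disjoint Ub Uc →
      Disjoint Ub (Ev i) → Disjoint Uc (Ev i) →
      (μ Ua).toReal + (μ Ub).toReal + (μ Uc).toReal = 1 →
      (μ (Ev i)).toReal = (μ Ua).toReal := by
    intro i Ua Ub Uc hsub hmb hmc hbc hbE hcE hsum
    have hlow : (μ Ua).toReal ≤ (μ (Ev i)).toReal :=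
      ENNReal.toReal_mono (measure_ne_top μ _) (measure_mono hsub)
    have hsubc : Ev i ⊆ (Ub ∪ Uc)ᶜ := by
      intro ξ hξ hmem
      rcases hmem with h | h
      · exact (Set.disjoint_left.mp hbE) h hξ
      · exact (Set.disjoint_left.mp hcE) h hξ
    have hle1 : μ Ub + μ Uc ≤ 1 := by
      rw [← measure_union hbc hmc]
      exact prob_le_one
    have hupp : (μ (Ev i)).toReal ≤ 1 - ((μ Ub).toReal + (μ Uc).toReal) := by
      have e1 : μ (Ev i) ≤ 1 - (μ Ub + μ Uc) := by
        calc μ (Ev i) ≤ μ ((Ub ∪ Uc)ᶜ) := measure_mono hsubc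
          _ = 1 - μ (Ub ∪ Uc) := prob_compl_eq_one_sub (hmb.union hmc)
          _ = 1 - (μ Ub + μ Uc) := by rw [measure_union hbc hmc]
      have e2 : (1 - (μ Ub + μ Uc)).toReal = 1 - ((μ Ub).toReal + (μ Uc).toReal) := by
        rw [ENNReal.toReal_sub_of_le hle1 ENNReal.one_ne_top, ENNReal.toReal_one,
          ENNReal.toReal_add (measure_ne_top μ _) (measure_ne_top μ _)]
      calc (μ (Ev i)).toReal ≤ (1 - (μ Ub + μ Uc)).toReal :=
            ENNReal.toReal_mono (by simp [ENNReal.sub_ne_top]) e1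
        _ = 1 - ((μ Ub).toReal + (μ Uc).toReal) := e2
    linarith
  have hpne : p ≠ 0 := hp0.ne'
  have hden : (1 : ℝ) + (1 - p) ≠ 0 := by linarith
  have hv : p⁻¹ * ((1 - (1 - p) ^ 2)⁻¹ * (p * p)) +
      p⁻¹ * ((1 - (1 - p) ^ 2)⁻¹ * (p * ((1 - p) * p))) = 1 := by
    field_simp
    ring
  have hpp : p * p = p ^ 2 := by ring
  have hsum123 : (μ U1).toReal + (μ U2).toReal + (μ U3).toReal = 1 := by
    linarith [h1, h2, h3, hv, hpp]
  have e0 : (μ (Ev 0)).toReal = (μ U1).toReal := by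
    apply key 0 U1 U2 U3 U1_subset U2_meas U3_meas d23 (U2_nEv (by decide))
      (U3_nEv (by decide))
    linarith [hsum123]
  have e1 : (μ (Ev 1)).toReal = (μ U2).toReal := by
    apply key 1 U2 U1 U3 U2_subset U1_meas U3_meas d13 (U1_nEv (by decide))
      (U3_nEv (by decide))
    linarith [hsum123]
  have e2 : (μ (Ev 2)).toReal = (μ U3).toReal := by
    apply key 2 U3 U1 U2 U3_subset U1_meas U2_meas d12 (U1_nEv (by decide))
      (U2_nEv (by decide))
    linarith [hsum123]
  have t1 : (μ U1).toReal = (1 - p) * (1 + p * (1 - p)) / (1 + (1 - p)) := by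
    have ht : p⁻¹ * ((1 - (1 - p) ^ 2)⁻¹ * (p * p)) - p * p =
        (1 - p) * (1 + p * (1 - p)) / (1 + (1 - p)) := by
      rw [eq_div_iff hden]
      field_simp
      ring
    linarith [h1, ht]
  have t2 : (μ U2).toReal = (1 - p) / (1 + (1 - p)) := by
    rw [h2, eq_div_iff hden]
    field_simp
    ring
  have t3 : (μ U3).toReal = p * (1 - (1 - p) ^ 2) / (1 + (1 - p)) := by
    rw [h3, eq_div_iff hden]
    ring
  have A : (μ (Ev 0)).toReal = (1 - p) * (1 + p * (1 - p)) / (1 + (1 - p)) := e0.trans t1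
  have B : (μ (Ev 1)).toReal = (1 - p) / (1 + (1 - p)) := e1.trans t2
  have C : (μ (Ev 2)).toReal = p * (1 - (1 - p) ^ 2) / (1 + (1 - p)) := e2.trans t3
  refine ⟨A, B, C, fun hp => ?_⟩
  subst hp
  refine ⟨?_, ?_, ?_⟩
  · rw [show (5 : ℝ) / 12 = (1 - (1:ℝ)/2) * (1 + (1:ℝ)/2 * (1 - (1:ℝ)/2)) / (1 + (1 - (1:ℝ)/2))
      by norm_num]
    exact A
  · rw [show (1 : ℝ) / 3 = (1 - (1:ℝ)/2) / (1 + (1 - (1:ℝ)/2)) by norm_num]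
    exact B
  · rw [show (1 : ℝ) / 4 = (1:ℝ)/2 * (1 - (1 - (1:ℝ)/2) ^ 2) / (1 + (1 - (1:ℝ)/2)) by norm_num]
    exact C
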